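/- arXiv:1111.3690 — 2 statements merged into one kernel-verified Lean document; each statement's English description precedes it below -/
import Mathlib

section
/- Let K ≥ 1, let P be an n-voter profile over X, and x* ∈ X. Then x* is a possible cowinner for K-approval with respect to the addition of one new candidate if and only if both: (1) for every x ∈ X with S_K(x,P) > S_K(x*,P), the number n(P,K,x) of votes ranking x exactly in position K satisfies n(P,K,x) ≥ S_K(x,P) − S_K(x*,P); and (2) S_K(x*,P) ≥ Σ_{x ∈ X} max(0, S_K(x,P) − S_K(x*,P)). -/
namespace PcWNC

abbrev Profile := List (List ℕ)

/-- `v` is a linear-order vote over the candidate set `X`: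
a duplicate-free list whose members are exactly the elements of `X`. -/
def IsVote (X : Finset ℕ) (v : List ℕ) : Prop := v.Nodup ∧ ∀ c, c ∈ v ↔ c ∈ X

/-- `P` is a profile over `X`: every vote is a linear order on `X`. -/
def IsProfile (X : Finset ℕ) (P : Profile) : Prop := ∀ v ∈ P, IsVote X v

/-- Restriction of a profile: delete from each vote the candidates outside `X`. -/
def restrict (X : Finset ℕ) (P : Profile) : Profile :=
  P.map (fun v => v.filter (fun c => decide (c ∈ X)))

/-- `P'` extends `P` (w.r.t. the initial candidate set `X`). -/
def Extends (X : Finset ℕ) (P' P : Profile) : Prop := restrict X P' = P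

/-- Plurality score: number of votes ranking `x` first. -/
def ntop (P : Profile) (x : ℕ) : ℕ := P.countP (fun v => decide (v.head? = some x))

/-- `K`-approval score: number of votes ranking `x` within the top `K` positions. -/
def approval (K : ℕ) (P : Profile) (x : ℕ) : ℕ :=
  P.countP (fun v => decide (x ∈ v.take K))

/-- Number of votes ranking `x` exactly in (1-indexed) position `i`. -/
def nPos (P : Profile) (i : ℕ) (x : ℕ) : ℕ :=
  P.countP (fun v => decide (x ∈ v ∧ v.idxOf x + 1 = i))

/-- Borda score of `x`: total number of candidates ranked below `x` over all votes. -/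
def borda (P : Profile) (x : ℕ) : ℕ :=
  (P.map (fun v => v.countP (fun w => decide (v.idxOf x < v.idxOf w)))).sum

/-- Number of votes ranking `x` above `z`. -/
def nAbove (P : Profile) (x z : ℕ) : ℕ :=
  P.countP (fun v => decide (x ∈ v ∧ z ∈ v ∧ v.idxOf x < v.idxOf z))

/-- Score of `x` under the positional scoring vector `s` (position `i` counted from 0). -/
def score (s : ℕ → ℤ) (P : Profile) (x : ℕ) : ℤ :=
  (P.map (fun v => s (v.idxOf x))).sum

/-- Insert the candidates of `ys` immediately below `x` in the vote `v`. -/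
def insertBelow (x : ℕ) (ys : List ℕ) (v : List ℕ) : List ℕ :=
  v.takeWhile (fun c => decide (c ≠ x)) ++ x :: ys ++
    (v.dropWhile (fun c => decide (c ≠ x))).drop 1

/-- Insert the candidates of `ys` immediately below `x` in every vote of `P`. -/
def insertProfile (x : ℕ) (ys : List ℕ) (P : Profile) : Profile :=
  P.map (insertBelow x ys)

/-- Veto score: number of votes not ranking `x` last. -/
def vetoScore (P : Profile) (x : ℕ) : ℕ :=
  P.countP (fun v => decide (v.getLast? ≠ some x))

lemma mem_take_iff {l : List ℕ} {z n : ℕ} :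
    z ∈ l.take n ↔ z ∈ l ∧ l.idxOf z < n := by
  induction l generalizing n with
  | nil => simp
  | cons c t ih =>
    cases n with
    | zero => simp
    | succ n =>
      rw [List.take_succ_cons]
      by_cases hz : z = c
      · subst hz
        simp [List.idxOf_cons_self]
      · simp only [List.mem_cons, hz, false_or, ih,
          List.idxOf_cons_ne _ (fun h => hz h.symm), Nat.succ_lt_succ_iff]

lemma countP_split {α : Type*} (p q : α → Bool) (l : List α)
    (h : ∀ a ∈ l, q a = true → p a = true) :
    l.countP p = l.countP q + l.countP (fun a => p a && !q a) := by
  induction l with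
  | nil => simp
  | cons a t ih =>
    have ht := ih (fun x hx => h x (List.mem_cons_of_mem _ hx))
    have ha := h a (List.mem_cons_self)
    simp only [List.countP_cons, ht]
    by_cases hq : q a = true
    · simp [ha hq, hq]; omega
    · by_cases hp : p a = true <;> simp [hp, hq] <;> omega

lemma sum_countP_le (X : Finset ℕ) {α : Type*} (L : List α) (D : ℕ → α → Bool) (E : α → Bool)
    (h : ∀ v ∈ L, ∀ x1 ∈ X, ∀ x2 ∈ X, D x1 v = true → D x2 v = true → x1 = x2)
    (h2 : ∀ v ∈ L, ∀ x ∈ X, D x v = true → E v = true) :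
    ∑ x ∈ X, L.countP (D x) ≤ L.countP E := by
  induction L with
  | nil => simp
  | cons v t ih =>
    simp only [List.countP_cons, Finset.sum_add_distrib]
    have hstep : (∑ x ∈ X, if D x v = true then 1 else 0) ≤ (if E v = true then 1 else 0) := by
      by_cases hex : ∃ x ∈ X, D x v = true
      · obtain ⟨x0, hx0, hD⟩ := hex
        rw [if_pos (h2 v (List.mem_cons_self) x0 hx0 hD)]
        have heq : ∀ x ∈ X, (if D x v = true then (1:ℕ) else 0) = if x = x0 then 1 else 0 := by
          intro x hx
          by_cases hD' : D x v = true
          · rw [if_pos hD', if_pos (h v (List.mem_cons_self) x hx x0 hx0 hD' hD)]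
          · rw [if_neg hD', if_neg (fun hxx => hD' (by rw [hxx]; exact hD))]
        rw [Finset.sum_congr rfl heq, Finset.sum_ite_eq' X x0 (fun _ => 1), if_pos hx0]
      · push_neg at hex
        have hz : (∑ x ∈ X, if D x v = true then (1:ℕ) else 0) = 0 :=
          Finset.sum_eq_zero (fun x hx => if_neg (by simpa using hex x hx))
        rw [hz]; exact Nat.zero_le _
    have ht := ih (fun v' hv' => h v' (List.mem_cons_of_mem _ hv'))
      (fun v' hv' => h2 v' (List.mem_cons_of_mem _ hv'))
    omega

lemma isVote_length {X : Finset ℕ} {v : List ℕ} (hv : IsVote X v) : v.length = X.card := by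
  rw [← List.toFinset_card_of_nodup hv.1]
  congr 1
  ext c
  simp [List.mem_toFinset, hv.2 c]

lemma filter_vote {X : Finset ℕ} {v : List ℕ} (hv : ∀ c ∈ v, c ∈ X) :
    v.filter (fun c => decide (c ∈ X)) = v :=
  List.filter_eq_self.2 (fun c hc => by simpa using hv c hc)

lemma approval_cons (K : ℕ) (v : List ℕ) (Q : Profile) (z : ℕ) :
    approval K (v :: Q) z = approval K Q z + (if z ∈ v.take K then 1 else 0) := by
  simp [approval, List.countP_cons]

lemma nPos_cons (i : ℕ) (v : List ℕ) (Q : Profile) (z : ℕ) :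
    nPos (v :: Q) i z = nPos Q i z + (if z ∈ v ∧ v.idxOf z + 1 = i then 1 else 0) := by
  simp [nPos, List.countP_cons]


def topIns (K y : ℕ) (v : List ℕ) : List ℕ := v.take (K-1) ++ y :: v.drop (K-1)

def build (K y : ℕ) : (ℕ → ℕ) → Profile → Profile
  | _, [] => []
  | b, v :: Q =>
    if 0 < b (v.getD (K-1) y) then
      topIns K y v :: build K y (Function.update b (v.getD (K-1) y) (b (v.getD (K-1) y) - 1)) Q
    else (v ++ [y]) :: build K y b Q

lemma take_topIns {K y : ℕ} (hK : 1 ≤ K) {v : List ℕ} (hlen : K - 1 < v.length) :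
    (topIns K y v).take K = v.take (K - 1) ++ [y] := by
  have h1 : (v.take (K-1)).length = K - 1 := by rw [List.length_take]; omega
  rw [topIns, List.take_append, h1,
      List.take_of_length_le (by omega : (v.take (K-1)).length ≤ K),
      (by omega : K - (K-1) = 1)]
  simp

lemma topIns_isVote {K y : ℕ} {X : Finset ℕ} (hy : y ∉ X) {v : List ℕ} (hv : IsVote X v) :
    IsVote (insert y X) (topIns K y v) := by
  constructor
  · rw [topIns, List.nodup_middle, List.take_append_drop]
    exact List.nodup_cons.2 ⟨fun hyv => hy ((hv.2 y).1 hyv), hv.1⟩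
  · intro c
    have hm : c ∈ v.take (K-1) ∨ c ∈ v.drop (K-1) ↔ c ∈ v := by
      rw [← List.mem_append, List.take_append_drop]
    rw [topIns]
    simp only [List.mem_append, List.mem_cons, Finset.mem_insert, ← hv.2 c]
    tauto

lemma append_isVote {y : ℕ} {X : Finset ℕ} (hy : y ∉ X) {v : List ℕ} (hv : IsVote X v) :
    IsVote (insert y X) (v ++ [y]) := by
  constructor
  · rw [List.nodup_append]
    exact ⟨hv.1, List.nodup_singleton y,
      fun c hc d hd hcd => hy (by rw [List.mem_singleton] at hd; subst hd; subst hcd; exact (hv.2 c).1 hc)⟩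
  · intro c
    simp only [List.mem_append, List.mem_singleton, Finset.mem_insert, ← hv.2 c]
    tauto

lemma filter_topIns {K y : ℕ} {X : Finset ℕ} (hy : y ∉ X) {v : List ℕ}
    (hv : ∀ c ∈ v, c ∈ X) :
    (topIns K y v).filter (fun c => decide (c ∈ X)) = v := by
  rw [topIns, List.filter_append, List.filter_cons, if_neg (by simpa using hy),
    filter_vote (fun c hc => hv c (List.take_subset _ _ hc)),
    filter_vote (fun c hc => hv c (List.drop_subset _ _ hc)),
    List.take_append_drop]

lemma filter_appendY {y : ℕ} {X : Finset ℕ} (hy : y ∉ X) {v : List ℕ}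
    (hv : ∀ c ∈ v, c ∈ X) :
    (v ++ [y]).filter (fun c => decide (c ∈ X)) = v := by
  rw [List.filter_append, filter_vote hv, List.filter_cons, if_neg (by simpa using hy)]
  simp

lemma build_spec {K y : ℕ} (hK : 1 ≤ K) {X : Finset ℕ} (hy : y ∉ X) :
    ∀ (Q : Profile) (b : ℕ → ℕ), (∀ v ∈ Q, IsVote X v) → (∀ z, b z ≤ nPos Q K z) →
      IsProfile (insert y X) (build K y b Q) ∧
      restrict X (build K y b Q) = Q ∧
      (∀ z, z ≠ y → approval K Q z = approval K (build K y b Q) z + b z) ∧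
      approval K (build K y b Q) y
        = (∑ x ∈ X, b x) + Q.countP (fun v => decide (v.length < K)) := by
  intro Q
  induction Q with
  | nil =>
    intro b _ hb
    have hb0 : ∀ z, b z = 0 := fun z => Nat.le_zero.1 (by simpa [nPos] using hb z)
    refine ⟨by simp [build, IsProfile], by simp [build, restrict], ?_, ?_⟩
    · intro z _; simp [build, approval, hb0 z]
    · simp [build, approval, hb0]
  | cons v Q ih =>
    intro b hQ hb
    obtain ⟨hnd, hmemX⟩ := hQ v (List.mem_cons_self)
    have hQ' : ∀ w ∈ Q, IsVote X w := fun w hw => hQ w (List.mem_cons_of_mem _ hw)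
    have hyv : y ∉ v := fun h => hy ((hmemX y).1 h)
    have hnPosy : nPos (v :: Q) K y = 0 := by
      apply List.countP_eq_zero.2
      intro v' hv'
      simp only [decide_eq_true_eq]
      rintro ⟨hmem, -⟩
      exact hy (((hQ v' hv').2 y).1 hmem)
    have hby : b y = 0 := by have := hb y; omega
    by_cases hpos : 0 < b (v.getD (K-1) y)
    · -- top insertion case
      have hlen : K - 1 < v.length := by
        by_contra hlen
        have hgd : v.getD (K-1) y = y := by
          rw [List.getD_eq_getElem?_getD, List.getElem?_eq_none (by omega), Option.getD_none]
        rw [hgd] at hpos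
        omega
      have hgetD : v.getD (K-1) y = v[K-1]'hlen := by
        rw [List.getD_eq_getElem?_getD, List.getElem?_eq_getElem hlen, Option.getD_some]
      set x := v[K-1]'hlen with hxdef
      rw [hgetD] at hpos
      have hxmem : x ∈ v := List.getElem_mem _
      have hxX : x ∈ X := (hmemX x).1 hxmem
      have hxy : x ≠ y := fun h => hy (h ▸ hxX)
      have hidx : v.idxOf x = K - 1 := List.Nodup.idxOf_getElem hnd (K-1) hlen
      have hpred : ∀ z, (z ∈ v ∧ v.idxOf z + 1 = K) ↔ z = x := by
        intro z
        constructor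
        · rintro ⟨hzv, hzk⟩
          exact (List.idxOf_inj hzv).1 (by omega)
        · rintro rfl; exact ⟨hxmem, by omega⟩
      set b' := Function.update b x (b x - 1) with hb'def
      have hb'x : b' x = b x - 1 := by rw [hb'def, Function.update_self]
      have hb'ne : ∀ z, z ≠ x → b' z = b z := fun z hz => by
        rw [hb'def, Function.update_of_ne hz]
      have hb' : ∀ z, b' z ≤ nPos Q K z := by
        intro z
        by_cases hzx : z = x
        · subst hzx
          have h1 := hb x
          rw [nPos_cons, if_pos ((hpred x).2 rfl)] at h1
          omega
        · rw [hb'ne z hzx]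
          have h1 := hb z
          rw [nPos_cons, if_neg (fun hp => hzx ((hpred z).1 hp))] at h1
          omega
      obtain ⟨ihP, ihR, ihS, ihY⟩ := ih b' hQ' hb'
      have hbuild : build K y b (v :: Q) = topIns K y v :: build K y b' Q := by
        simp only [build, hgetD, if_pos hpos, hb'def]
      have htakeK : v.take K = v.take (K-1) ++ [x] := by
        conv_lhs => rw [show K = (K-1)+1 by omega]
        rw [List.take_succ, List.getElem?_eq_getElem hlen]
        rfl
      have hxnt : x ∉ v.take (K-1) := fun h => by
        have := (mem_take_iff.1 h).2
        omega
      refine ⟨?_, ?_, ?_, ?_⟩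
      · intro w hw
        rcases List.mem_cons.1 (hbuild ▸ hw) with rfl | hw'
        · exact topIns_isVote hy ⟨hnd, hmemX⟩
        · exact ihP w hw'
      · rw [hbuild, restrict, List.map_cons, filter_topIns hy (fun c hc => (hmemX c).1 hc)]
        rw [restrict] at ihR
        rw [ihR]
      · intro z hzy
        rw [hbuild, approval_cons, approval_cons, ihS z hzy, htakeK]
        have hmemT : z ∈ (topIns K y v).take K ↔ z ∈ v.take (K-1) := by
          rw [take_topIns hK hlen]
          simp [List.mem_append, hzy]
        by_cases hzx : z = x
        · subst hzx
          rw [if_pos (by simp), if_neg (fun h => hxnt (hmemT.1 h))]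
          have : b x = b' x + 1 := by omega
          omega
        · have hiff : z ∈ v.take (K-1) ++ [x] ↔ z ∈ (topIns K y v).take K := by
            rw [hmemT]
            simp [List.mem_append, hzx]
          rw [hb'ne z hzx] at *
          by_cases hzt : z ∈ v.take (K-1) ++ [x]
          · rw [if_pos hzt, if_pos (hiff.1 hzt)]; omega
          · rw [if_neg hzt, if_neg (fun h => hzt (hiff.2 h))]; omega
      · rw [hbuild, approval_cons, ihY]
        have hy1 : y ∈ (topIns K y v).take K := by
          rw [take_topIns hK hlen]; simp
        rw [if_pos hy1]
        have hcnt : (v::Q).countP (fun w => decide (w.length < K))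
            = Q.countP (fun w => decide (w.length < K)) := by
          rw [List.countP_cons, if_neg (by simp; omega), Nat.add_zero]
        have hsum : ∑ w ∈ X, b w = (∑ w ∈ X, b' w) + 1 := by
          rw [hb'def, Finset.sum_update_of_mem hxX,
            Finset.sum_eq_sum_sdiff_singleton_add hxX b]
          omega
        omega
    · -- bottom insertion case
      have hbuild : build K y b (v :: Q) = (v ++ [y]) :: build K y b Q := by
        simp only [build, if_neg hpos]
      have hb2 : ∀ z, b z ≤ nPos Q K z := by
        intro z
        have h1 := hb z
        rw [nPos_cons] at h1
        by_cases hzp : z ∈ v ∧ v.idxOf z + 1 = K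
        · obtain ⟨hzv, hzk⟩ := hzp
          have hl : v.idxOf z < v.length := List.idxOf_lt_length_iff.2 hzv
          have hz0 : z = v.getD (K-1) y := by
            rw [List.getD_eq_getElem?_getD,
              List.getElem?_eq_getElem (by omega : K - 1 < v.length), Option.getD_some]
            exact ((List.idxOf_inj hzv).1 (by
              rw [List.Nodup.idxOf_getElem hnd (K-1) (by omega)]; omega))
          rw [hz0]
          omega
        · rw [if_neg hzp] at h1; omega
      obtain ⟨ihP, ihR, ihS, ihY⟩ := ih b hQ' hb2
      have hmemB : ∀ z, z ≠ y → (z ∈ (v ++ [y]).take K ↔ z ∈ v.take K) := by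
        intro z hzy
        rw [List.take_append]
        simp only [List.mem_append]
        constructor
        · rintro (h | h)
          · exact h
          · exact absurd (List.mem_singleton.1 (List.take_subset _ _ h)) hzy
        · exact Or.inl
      have hymem : y ∈ (v ++ [y]).take K ↔ v.length < K := by
        rw [List.take_append]
        constructor
        · intro h
          rcases List.mem_append.1 h with h | h
          · exact absurd (List.take_subset _ _ h) hyv
          · by_contra hlen
            push_neg at hlen
            rw [Nat.sub_eq_zero_of_le hlen] at h
            simp at h
        · intro hlt
          apply List.mem_append_right
          rw [show K - v.length = (K - v.length - 1) + 1 by omega, List.take_succ_cons]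
          exact List.mem_cons_self
      refine ⟨?_, ?_, ?_, ?_⟩
      · intro w hw
        rcases List.mem_cons.1 (hbuild ▸ hw) with rfl | hw'
        · exact append_isVote hy ⟨hnd, hmemX⟩
        · exact ihP w hw'
      · rw [hbuild, restrict, List.map_cons, filter_appendY hy (fun c hc => (hmemX c).1 hc)]
        rw [restrict] at ihR
        rw [ihR]
      · intro z hzy
        rw [hbuild, approval_cons, approval_cons, ihS z hzy]
        by_cases hzt : z ∈ v.take K
        · rw [if_pos hzt, if_pos ((hmemB z hzy).2 hzt)]; omega
        · rw [if_neg hzt, if_neg (fun h => hzt ((hmemB z hzy).1 h))]; omega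
      · rw [hbuild, approval_cons, ihY, List.countP_cons]
        by_cases hlt : v.length < K
        · rw [if_pos (hymem.2 hlt), if_pos (by simpa using hlt)]; omega
        · rw [if_neg (fun h => hlt (hymem.1 h)), if_neg (by simpa using hlt)]; omega


lemma restrict_facts {X : Finset ℕ} {y : ℕ} (hy : y ∉ X) {v' : List ℕ}
    (hv : IsVote (insert y X) v') (K : ℕ) {z : ℕ} (hzy : z ≠ y) :
    (z ∈ v'.take K → z ∈ (v'.filter (fun c => decide (c ∈ X))).take K) ∧
    (z ∈ (v'.filter (fun c => decide (c ∈ X))).take K → z ∉ v'.take K →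
      (z ∈ v'.filter (fun c => decide (c ∈ X)) ∧
        (v'.filter (fun c => decide (c ∈ X))).idxOf z + 1 = K) ∧ y ∈ v'.take K) := by
  obtain ⟨a, bb, rfl⟩ := List.append_of_mem ((hv.2 y).2 (Finset.mem_insert_self _ _))
  have hnd := hv.1
  rw [List.nodup_middle] at hnd
  have hya : y ∉ a := fun h => (List.nodup_cons.1 hnd).1 (List.mem_append_left _ h)
  have hmem := hv.2
  have ha' : ∀ c ∈ a, c ∈ X := by
    intro c hc
    rcases Finset.mem_insert.1 ((hmem c).1 (List.mem_append_left _ hc)) with rfl | h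
    · exact absurd hc hya
    · exact h
  have hb' : ∀ c ∈ bb, c ∈ X := by
    intro c hc
    have hyb : y ∉ bb := fun h => (List.nodup_cons.1 hnd).1 (List.mem_append_right _ h)
    rcases Finset.mem_insert.1
        ((hmem c).1 (List.mem_append_right _ (List.mem_cons_of_mem _ hc))) with rfl | h
    · exact absurd hc hyb
    · exact h
  have hfil : (a ++ y :: bb).filter (fun c => decide (c ∈ X)) = a ++ bb := by
    rw [List.filter_append, List.filter_cons, if_neg (by simpa using hy),
      filter_vote ha', filter_vote hb']
  rw [hfil]
  constructor
  · intro hz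
    rw [List.take_append] at hz ⊢
    rcases List.mem_append.1 hz with h | h
    · exact List.mem_append_left _ h
    · apply List.mem_append_right
      rcases Nat.eq_zero_or_pos (K - a.length) with h0 | h0
      · rw [h0] at h; simp at h
      · rw [show K - a.length = (K - a.length - 1) + 1 by omega, List.take_succ_cons] at h
        rcases List.mem_cons.1 h with rfl | h
        · exact absurd rfl hzy
        · have h2 : z ∈ (bb.take (K - a.length)).take (K - a.length - 1) := by
            rw [List.take_take, min_eq_left (by omega)]
            exact h
          exact List.take_subset _ _ h2
  · intro hz hz'
    have hzab : z ∈ a ++ bb := (mem_take_iff.1 hz).1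
    have hidxlt : (a ++ bb).idxOf z < K := (mem_take_iff.1 hz).2
    have hzv' : z ∈ a ++ y :: bb := by
      rcases List.mem_append.1 hzab with h | h
      · exact List.mem_append_left _ h
      · exact List.mem_append_right _ (List.mem_cons_of_mem _ h)
    have hidxge : K ≤ (a ++ y :: bb).idxOf z := by
      by_contra hc
      push_neg at hc
      exact hz' (mem_take_iff.2 ⟨hzv', hc⟩)
    by_cases hza : z ∈ a
    · rw [List.idxOf_append_of_mem hza] at hidxge
      rw [List.idxOf_append_of_mem hza] at hidxlt
      omega
    · have hylt : a.length < K := by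
        rw [List.idxOf_append_of_notMem hza] at hidxlt
        omega
      rw [List.idxOf_append_of_notMem hza, List.idxOf_cons_ne _ (Ne.symm hzy)] at hidxge
      rw [List.idxOf_append_of_notMem hza] at hidxlt ⊢
      refine ⟨⟨hzab, by omega⟩, ?_⟩
      apply mem_take_iff.2
      refine ⟨List.mem_append_right _ (List.mem_cons_self), ?_⟩
      rw [List.idxOf_append_of_notMem hya, List.idxOf_cons_self]
      omega


/-- Characterization of possible cowinners for `K`-approval w.r.t. adding one new candidate. -/
theorem stmt_2 (K : ℕ) (hK : 1 ≤ K) (X : Finset ℕ) (P : Profile) (hP : IsProfile X P)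
    (xstar : ℕ) (hx : xstar ∈ X) :
    (∃ y, y ∉ X ∧ ∃ P', IsProfile (insert y X) P' ∧ Extends X P' P ∧
        ∀ z ∈ insert y X, approval K P' z ≤ approval K P' xstar) ↔
      ((∀ x ∈ X, approval K P xstar < approval K P x →
          approval K P x - approval K P xstar ≤ nPos P K x) ∧
        ∑ x ∈ X, (approval K P x - approval K P xstar) ≤ approval K P xstar) := by
  constructor
  · rintro ⟨y, hyX, P', hP', hExt, hwin⟩
    have hxy : xstar ≠ y := fun h => hyX (h ▸ hx)
    have happ : ∀ z, approval K P z
        = P'.countP (fun v => decide (z ∈ (v.filter (fun c => decide (c ∈ X))).take K)) := by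
      intro z
      rw [← hExt, restrict, approval, List.countP_map]
      rfl
    have hnpos : ∀ z, nPos P K z
        = P'.countP (fun v => decide (z ∈ v.filter (fun c => decide (c ∈ X)) ∧
            (v.filter (fun c => decide (c ∈ X))).idxOf z + 1 = K)) := by
      intro z
      rw [← hExt, restrict, nPos, List.countP_map]
      rfl
    have hxs' : approval K P' xstar ≤ approval K P xstar := by
      rw [happ xstar, approval]
      apply List.countP_mono_left
      intro v hv hp
      simp only [decide_eq_true_eq] at hp ⊢
      exact (restrict_facts hyX (hP' v hv) K hxy).1 hp
    have hsplit : ∀ x, x ≠ y → approval K P x = approval K P' x +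
        P'.countP (fun v => decide (x ∈ (v.filter (fun c => decide (c ∈ X))).take K)
          && ! decide (x ∈ v.take K)) := by
      intro x hxy'
      rw [happ x, approval]
      exact countP_split _ _ _ (fun v hv hq => by
        simp only [decide_eq_true_eq] at hq ⊢
        exact (restrict_facts hyX (hP' v hv) K hxy').1 hq)
    have hdrop : ∀ x, x ≠ y →
        P'.countP (fun v => decide (x ∈ (v.filter (fun c => decide (c ∈ X))).take K)
          && ! decide (x ∈ v.take K)) ≤ nPos P K x := by
      intro x hxy'
      rw [hnpos x]
      apply List.countP_mono_left
      intro v hv hp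
      simp only [Bool.and_eq_true, Bool.not_eq_true', decide_eq_true_eq,
        decide_eq_false_iff_not] at hp
      simp only [decide_eq_true_eq]
      exact ((restrict_facts hyX (hP' v hv) K hxy').2 hp.1 hp.2).1
    constructor
    · intro x hxX hlt
      have hxy' : x ≠ y := fun h => hyX (h ▸ hxX)
      have h1 := hsplit x hxy'
      have h2 := hdrop x hxy'
      have h3 : approval K P' x ≤ approval K P xstar :=
        le_trans (hwin x (Finset.mem_insert_of_mem hxX)) hxs'
      omega
    · have hyY : approval K P' y ≤ approval K P xstar :=
        le_trans (hwin y (Finset.mem_insert_self _ _)) hxs'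
      have hsum : ∑ x ∈ X, (approval K P x - approval K P xstar) ≤
          ∑ x ∈ X, P'.countP (fun v =>
            decide (x ∈ (v.filter (fun c => decide (c ∈ X))).take K)
              && ! decide (x ∈ v.take K)) := by
        apply Finset.sum_le_sum
        intro x hxX
        have hxy' : x ≠ y := fun h => hyX (h ▸ hxX)
        have h1 := hsplit x hxy'
        have h3 : approval K P' x ≤ approval K P xstar :=
          le_trans (hwin x (Finset.mem_insert_of_mem hxX)) hxs'
        omega
      have hle : ∑ x ∈ X, P'.countP (fun v =>
            decide (x ∈ (v.filter (fun c => decide (c ∈ X))).take K)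
              && ! decide (x ∈ v.take K))
          ≤ P'.countP (fun v => decide (y ∈ v.take K)) := by
        apply sum_countP_le X P'
        · intro v hv x1 hx1 x2 hx2 hD1 hD2
          simp only [Bool.and_eq_true, Bool.not_eq_true', decide_eq_true_eq,
            decide_eq_false_iff_not] at hD1 hD2
          have e1 := ((restrict_facts hyX (hP' v hv) K
            (fun h => hyX (h ▸ hx1))).2 hD1.1 hD1.2).1
          have e2 := ((restrict_facts hyX (hP' v hv) K
            (fun h => hyX (h ▸ hx2))).2 hD2.1 hD2.2).1
          exact (List.idxOf_inj e1.1).1 (by omega)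
        · intro v hv x hxX hD
          simp only [Bool.and_eq_true, Bool.not_eq_true', decide_eq_true_eq,
            decide_eq_false_iff_not] at hD
          simp only [decide_eq_true_eq]
          exact ((restrict_facts hyX (hP' v hv) K
            (fun h => hyX (h ▸ hxX))).2 hD.1 hD.2).2
      have hyP' : P'.countP (fun v => decide (y ∈ v.take K)) = approval K P' y := rfl
      omega
  · rintro ⟨h1, h2⟩
    obtain ⟨y, hyX⟩ := Infinite.exists_notMem_finset X
    set b : ℕ → ℕ := fun z => approval K P z - approval K P xstar with hbdef
    have hb : ∀ z, b z ≤ nPos P K z := by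
      intro z
      by_cases hzX : z ∈ X
      · by_cases hlt : approval K P xstar < approval K P z
        · exact h1 z hzX hlt
        · have : b z = 0 := by simp only [hbdef]; omega
          omega
      · have hz0 : approval K P z = 0 := by
          apply List.countP_eq_zero.2
          intro v hv
          simp only [decide_eq_true_eq]
          intro hmem
          exact hzX (((hP v hv).2 z).1 (List.take_subset _ _ hmem))
        have : b z = 0 := by simp only [hbdef]; omega
        omega
    obtain ⟨hProf, hRes, hScore, hYscore⟩ := build_spec hK hyX P b hP hb
    refine ⟨y, hyX, build K y b P, hProf, hRes, ?_⟩
    have hxy : xstar ≠ y := fun h => hyX (h ▸ hx)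
    have hbx : b xstar = 0 := by simp only [hbdef]; omega
    have hxs : approval K (build K y b P) xstar = approval K P xstar := by
      have := hScore xstar hxy
      omega
    intro z hz
    rcases Finset.mem_insert.1 hz with rfl | hzX
    · rw [hYscore, hxs]
      by_cases hcard : X.card < K
      · have hall : ∀ w ∈ X, approval K P w = P.length := by
          intro w hw
          apply List.countP_eq_length.2
          intro v hv
          simp only [decide_eq_true_eq]
          rw [List.take_of_length_le (by rw [isVote_length (hP v hv)]; omega)]
          exact ((hP v hv).2 w).2 hw
        have hsum0 : ∑ x ∈ X, b x = 0 := Finset.sum_eq_zero (fun w hw => by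
          simp only [hbdef, hall w hw, hall xstar hx]
          omega)
        have hcnt : P.countP (fun v => decide (v.length < K)) = P.length :=
          List.countP_eq_length.2 (fun v hv => by
            simp only [decide_eq_true_eq]
            rw [isVote_length (hP v hv)]
            exact hcard)
        rw [hsum0, hcnt, hall xstar hx]
        omega
      · have hcnt : P.countP (fun v => decide (v.length < K)) = 0 :=
          List.countP_eq_zero.2 (fun v hv => by
            simp only [decide_eq_true_eq]
            rw [isVote_length (hP v hv)]
            omega)
        rw [hcnt]
        have he : X.sum b = ∑ x ∈ X, b x := rfl
        omega
    · have hzy : z ≠ y := fun h => hyX (h ▸ hzX)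
      have hs := hScore z hzy
      have hbz : b z = approval K P z - approval K P xstar := rfl
      rw [hxs]
      omega

end PcWNC
end

section
/- Let P be a profile over X of n ≥ 1 votes and x* ∈ X. If x* is undominated in P (for every z ≠ x*, at least one vote ranks x* above z), then for the Borda rule x* is a possible cowinner with respect to the addition of sufficiently many new candidates: there exists k₀ such that for all k ≥ k₀, inserting k new candidates immediately below x* in every vote yields a profile in which x* has maximal Borda score. -/
namespace PcWNC

/-- Per-vote Borda count. -/
def f (v : List ℕ) (z : ℕ) : ℕ := v.countP (fun w => decide (v.idxOf z < v.idxOf w))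

lemma decomp {x : ℕ} {v : List ℕ} (hx : x ∈ v) (ys : List ℕ) :
    ∃ l₁ l₂, v = l₁ ++ x :: l₂ ∧ x ∉ l₁ ∧ insertBelow x ys v = l₁ ++ x :: (ys ++ l₂) := by
  induction v with
  | nil => simp at hx
  | cons a t ih =>
    by_cases hax : a = x
    · subst hax
      exact ⟨[], t, by simp, by simp, by simp [insertBelow]⟩
    · have hxt : x ∈ t := by
        rcases List.mem_cons.1 hx with h | h
        · exact absurd h.symm hax
        · exact h
      obtain ⟨l₁, l₂, hv, hnm, hins⟩ := ih hxt
      refine ⟨a :: l₁, l₂, by simp [hv], ?_, ?_⟩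
      · simp only [List.mem_cons, not_or]
        exact ⟨fun h => hax h.symm, hnm⟩
      · have hins' : insertBelow x ys (a :: t) = a :: insertBelow x ys t := by
          simp [insertBelow, List.takeWhile_cons, List.dropWhile_cons, hax]
        rw [hins', hins]; simp

lemma countP_lt_length {p : ℕ → Bool} {l : List ℕ} {z : ℕ} (hz : z ∈ l) (hpz : p z = false) :
    l.countP p + 1 ≤ l.length := by
  obtain ⟨s, t, rfl⟩ := List.append_of_mem hz
  have h1 := List.countP_le_length (l := s) (p := p)
  have h2 := List.countP_le_length (l := t) (p := p)
  simp only [List.countP_append, List.countP_cons, List.length_append, List.length_cons, hpz,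
    Bool.false_eq_true, if_false]
  omega

section PerVote

variable {x : ℕ} {ys l₁ l₂ : List ℕ}

lemma idx_x (h : x ∉ l₁) : (l₁ ++ x :: (ys ++ l₂)).idxOf x = l₁.length := by
  rw [List.idxOf_append_of_notMem h, List.idxOf_cons_self]
  omega

lemma idx_mem_l₁ {w : ℕ} (hw : w ∈ l₁) :
    (l₁ ++ x :: (ys ++ l₂)).idxOf w < l₁.length := by
  rw [List.idxOf_append_of_mem hw]; exact List.idxOf_lt_length_iff.2 hw

lemma idx_not_l₁ {w : ℕ} (hw : w ∉ l₁) (hwx : w ≠ x) :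
    (l₁ ++ x :: (ys ++ l₂)).idxOf w = l₁.length + 1 + (ys ++ l₂).idxOf w := by
  rw [List.idxOf_append_of_notMem hw, List.idxOf_cons_ne _ (Ne.symm hwx)]
  omega

lemma idx_mem_ys {w : ℕ} (hw : w ∉ l₁) (hwx : w ≠ x) (hwys : w ∈ ys) :
    (l₁ ++ x :: (ys ++ l₂)).idxOf w = l₁.length + 1 + ys.idxOf w := by
  rw [idx_not_l₁ hw hwx, List.idxOf_append_of_mem hwys]

lemma idx_mem_l₂ {w : ℕ} (hw : w ∉ l₁) (hwx : w ≠ x) (hwys : w ∉ ys) :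
    (l₁ ++ x :: (ys ++ l₂)).idxOf w = l₁.length + 1 + ys.length + l₂.idxOf w := by
  rw [idx_not_l₁ hw hwx, List.idxOf_append_of_notMem hwys]; omega

variable (hxl₁ : x ∉ l₁) (hys : ∀ y ∈ ys, y ∉ l₁ ∧ y ≠ x)
  (hl₂ : ∀ w ∈ l₂, w ∉ l₁ ∧ w ≠ x)

include hxl₁ hys hl₂ in
/-- Borda count of x in the extended vote is exactly at least k + |l₂|. -/
lemma f_x_ge : ys.length + l₂.length ≤ f (l₁ ++ x :: (ys ++ l₂)) x := by
  unfold f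
  set p : ℕ → Bool := fun w => decide ((l₁ ++ x :: (ys ++ l₂)).idxOf x < (l₁ ++ x :: (ys ++ l₂)).idxOf w) with hp
  have hxi : (l₁ ++ x :: (ys ++ l₂)).idxOf x = l₁.length := idx_x hxl₁
  have hys' : ys.countP p = ys.length := by
    rw [List.countP_eq_length]
    intro y hy
    have := idx_mem_ys (l₂ := l₂) (hys y hy).1 (hys y hy).2 hy
    simp only [hp, hxi, this, decide_eq_true_eq]; omega
  have hl₂' : l₂.countP p = l₂.length := by
    rw [List.countP_eq_length]
    intro w hw
    have h1 := idx_not_l₁ (ys := ys) (l₂ := l₂) (hl₂ w hw).1 (hl₂ w hw).2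
    simp only [hp, hxi, h1, decide_eq_true_eq]; omega
  have : (l₁ ++ x :: (ys ++ l₂)).countP p = l₁.countP p + ((if p x then 1 else 0) + (ys.countP p + l₂.countP p)) := by
    rw [List.countP_append, List.countP_cons, List.countP_append]; ring
  rw [this, hys', hl₂']
  omega

include hxl₁ hys in
omit hl₂ in
/-- If z is below x in the extended vote, its count is at most |l₂|. -/
lemma f_z_below {z : ℕ} (hzl₁ : z ∉ l₁) (hzx : z ≠ x) (hzys : z ∉ ys) :
    f (l₁ ++ x :: (ys ++ l₂)) z ≤ l₂.length := by
  unfold f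
  set p : ℕ → Bool := fun w => decide ((l₁ ++ x :: (ys ++ l₂)).idxOf z < (l₁ ++ x :: (ys ++ l₂)).idxOf w) with hp
  have hzi : (l₁ ++ x :: (ys ++ l₂)).idxOf z = l₁.length + 1 + ys.length + l₂.idxOf z :=
    idx_mem_l₂ hzl₁ hzx hzys
  have h1 : l₁.countP p = 0 := by
    rw [List.countP_eq_zero]
    intro w hw
    have := idx_mem_l₁ (x := x) (ys := ys) (l₂ := l₂) hw
    simp only [hp, hzi, decide_eq_true_eq]; omega
  have h2 : p x = false := by
    have := idx_x (ys := ys) (l₂ := l₂) hxl₁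
    simp only [hp, hzi, this, decide_eq_false_iff_not]; omega
  have h3 : ys.countP p = 0 := by
    rw [List.countP_eq_zero]
    intro y hy
    have h4 := idx_mem_ys (l₂ := l₂) (hys y hy).1 (hys y hy).2 hy
    have h5 : ys.idxOf y < ys.length := List.idxOf_lt_length_iff.2 hy
    simp only [hp, hzi, h4, decide_eq_true_eq]; omega
  have h6 := List.countP_le_length (l := l₂) (p := p)
  have : (l₁ ++ x :: (ys ++ l₂)).countP p = l₁.countP p + ((if p x then 1 else 0) + (ys.countP p + l₂.countP p)) := by
    rw [List.countP_append, List.countP_cons, List.countP_append]; ring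
  rw [this, h1, h2, h3]
  simpa using h6

include hxl₁ hys hl₂ in
/-- A new candidate's count is strictly below |ys| + |l₂|. -/
lemma f_y_le {y : ℕ} (hy : y ∈ ys) :
    f (l₁ ++ x :: (ys ++ l₂)) y + 1 ≤ ys.length + l₂.length := by
  unfold f
  set p : ℕ → Bool := fun w => decide ((l₁ ++ x :: (ys ++ l₂)).idxOf y < (l₁ ++ x :: (ys ++ l₂)).idxOf w) with hp
  have hyi : (l₁ ++ x :: (ys ++ l₂)).idxOf y = l₁.length + 1 + ys.idxOf y :=
    idx_mem_ys (hys y hy).1 (hys y hy).2 hy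
  have h1 : l₁.countP p = 0 := by
    rw [List.countP_eq_zero]
    intro w hw
    have := idx_mem_l₁ (x := x) (ys := ys) (l₂ := l₂) hw
    simp only [hp, hyi, decide_eq_true_eq]; omega
  have h2 : p x = false := by
    have := idx_x (ys := ys) (l₂ := l₂) hxl₁
    simp only [hp, hyi, this, decide_eq_false_iff_not]; omega
  have h3 : ys.countP p + 1 ≤ ys.length := by
    apply countP_lt_length hy
    simp [hp]
  have h6 := List.countP_le_length (l := l₂) (p := p)
  have : (l₁ ++ x :: (ys ++ l₂)).countP p = l₁.countP p + ((if p x then 1 else 0) + (ys.countP p + l₂.countP p)) := by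
    rw [List.countP_append, List.countP_cons, List.countP_append]; ring
  rw [this, h1, h2]
  simp only [Bool.false_eq_true, if_false]
  omega

end PerVote

lemma f_lt_length {z : ℕ} {v : List ℕ} (hz : z ∈ v) : f v z + 1 ≤ v.length := by
  apply countP_lt_length hz
  simp

lemma borda_insert (x : ℕ) (ys : List ℕ) (P : Profile) (z : ℕ) :
    borda (insertProfile x ys P) z = (P.map (fun v => f (insertBelow x ys v) z)).sum := by
  simp only [borda, insertProfile, List.map_map]
  rfl

lemma vote_facts {X : Finset ℕ} {v : List ℕ} (hv : IsVote X v) {xstar : ℕ} (hx : xstar ∈ X)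
    (ys : List ℕ) (hysX : ∀ y ∈ ys, y ∉ X) :
    ∃ l₁ l₂, v = l₁ ++ xstar :: l₂ ∧ xstar ∉ l₁ ∧
      insertBelow xstar ys v = l₁ ++ xstar :: (ys ++ l₂) ∧
      (∀ y ∈ ys, y ∉ l₁ ∧ y ≠ xstar) ∧ (∀ w ∈ l₂, w ∉ l₁ ∧ w ≠ xstar) ∧
      l₁.length + 1 + l₂.length = X.card := by
  have hxv : xstar ∈ v := (hv.2 xstar).2 hx
  obtain ⟨l₁, l₂, hveq, hnm, hins⟩ := decomp hxv ys
  have hnd : (l₁ ++ xstar :: l₂).Nodup := hveq ▸ hv.1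
  rw [List.nodup_append] at hnd
  refine ⟨l₁, l₂, hveq, hnm, hins, ?_, ?_, ?_⟩
  · intro y hy
    have hyv : y ∉ v := fun hc => hysX y hy ((hv.2 y).1 hc)
    constructor
    · intro hc; exact hyv (hveq ▸ List.mem_append_left _ hc)
    · intro hc; exact hysX y hy (hc ▸ hx)
  · intro w hw
    constructor
    · intro hc; exact hnd.2.2 w hc w (List.mem_cons_of_mem _ hw) rfl
    · intro hc; exact (List.nodup_cons.1 hnd.2.1).1 (hc ▸ hw)
  · have hcard : v.toFinset = X := by
      ext c; rw [List.mem_toFinset]; exact hv.2 c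
    have hlen : v.length = X.card := by
      rw [← hcard, List.toFinset_card_of_nodup hv.1]
    rw [hveq] at hlen
    simp at hlen
    omega

/-- If `xstar` is undominated, then for all sufficiently large `k`, inserting `k` new
candidates immediately below `xstar` in every vote makes `xstar` a Borda cowinner. -/
theorem stmt_10 (X : Finset ℕ) (P : Profile) (hP : IsProfile X P) (hne : P ≠ [])
    (xstar : ℕ) (hx : xstar ∈ X)
    (hund : ∀ z ∈ X, z ≠ xstar → ∃ v ∈ P, v.idxOf xstar < v.idxOf z) :
    ∃ k₀, ∀ k, k₀ ≤ k → ∀ ys : List ℕ, ys.Nodup → ys.length = k →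
      (∀ y ∈ ys, y ∉ X) →
      ∀ z, (z ∈ X ∨ z ∈ ys) →
        borda (insertProfile xstar ys P) z ≤ borda (insertProfile xstar ys P) xstar := by
  refine ⟨(P.length + 1) * (X.card + 1), ?_⟩
  intro k hk ys hysnd hyslen hysX z hz
  set m := X.card with hm
  have hm1 : 1 ≤ m := Finset.card_pos.2 ⟨xstar, hx⟩
  -- per-vote facts
  have keyA : ∀ v ∈ P, k ≤ f (insertBelow xstar ys v) xstar := by
    intro v hv
    obtain ⟨l₁, l₂, hveq, hnm, hins, hys', hl₂', hlen⟩ :=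
      vote_facts (hP v hv) hx ys hysX
    rw [hins]
    have := f_x_ge hnm hys' hl₂'
    omega
  have keyB : ∀ v ∈ P, ∀ w, (w ∈ X ∨ w ∈ ys) → f (insertBelow xstar ys v) w + 1 ≤ m + k := by
    intro v hv w hw
    obtain ⟨l₁, l₂, hveq, hnm, hins, hys', hl₂', hlen⟩ :=
      vote_facts (hP v hv) hx ys hysX
    have hwv : w ∈ insertBelow xstar ys v := by
      rw [hins]
      rcases hw with hw | hw
      · have : w ∈ v := ((hP v hv).2 w).2 hw
        rw [hveq] at this
        simp only [List.mem_append, List.mem_cons] at this ⊢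
        tauto
      · simp only [List.mem_append, List.mem_cons]
        tauto
    have h1 := f_lt_length hwv
    have h2 : (insertBelow xstar ys v).length = l₁.length + 1 + ys.length + l₂.length := by
      rw [hins]; simp; omega
    omega
  have keyD : ∀ v ∈ P, ∀ y ∈ ys,
      f (insertBelow xstar ys v) y ≤ f (insertBelow xstar ys v) xstar := by
    intro v hv y hy
    obtain ⟨l₁, l₂, hveq, hnm, hins, hys', hl₂', hlen⟩ :=
      vote_facts (hP v hv) hx ys hysX
    rw [hins]
    have h1 := f_y_le hnm hys' hl₂' hy
    have h2 := f_x_ge hnm hys' hl₂'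
    omega
  -- case split on z
  by_cases hzx : z = xstar
  · subst hzx; exact le_refl _
  rcases hz with hzX | hzys
  swap
  · -- z is a new candidate
    rw [borda_insert, borda_insert]
    exact List.sum_le_sum (fun v hv => keyD v hv z hzys)
  · -- z ∈ X, z ≠ xstar
    have keyC : ∀ v ∈ P, v.idxOf xstar < v.idxOf z →
        f (insertBelow xstar ys v) z ≤ m := by
      intro v hv hidx
      obtain ⟨l₁, l₂, hveq, hnm, hins, hys', hl₂', hlen⟩ :=
        vote_facts (hP v hv) hx ys hysX
      have hzys' : z ∉ ys := fun hc => hysX z hc hzX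
      have hzl₁ : z ∉ l₁ := by
        intro hc
        have h1 : v.idxOf z < l₁.length := by
          rw [hveq, List.idxOf_append_of_mem hc]
          exact List.idxOf_lt_length_iff.2 hc
        have h2 : v.idxOf xstar = l₁.length := by
          rw [hveq, List.idxOf_append_of_notMem hnm, List.idxOf_cons_self]
          omega
        omega
      rw [hins]
      have := f_z_below (l₂ := l₂) hnm hys' hzl₁ hzx hzys'
      omega
    obtain ⟨v₀, hv₀, hidx⟩ := hund z hzX hzx
    obtain ⟨A, B, hPeq⟩ := List.append_of_mem hv₀
    rw [borda_insert, borda_insert]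
    set gz := fun v => f (insertBelow xstar ys v) z with hgz
    set gx := fun v => f (insertBelow xstar ys v) xstar with hgx
    have hsum : (P.map gz).sum = (A.map gz).sum + gz v₀ + (B.map gz).sum := by
      rw [hPeq]; simp; omega
    have hmemA : ∀ v ∈ A, v ∈ P := fun v hv => hPeq ▸ List.mem_append_left _ hv
    have hmemB : ∀ v ∈ B, v ∈ P := fun v hv =>
      hPeq ▸ List.mem_append_right _ (List.mem_cons_of_mem _ hv)
    have hA : (A.map gz).sum ≤ A.length * (m + k - 1) := by
      have := List.sum_le_card_nsmul (A.map gz) (m + k - 1) ?_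
      · simpa using this
      · intro a ha
        obtain ⟨v, hv, rfl⟩ := List.mem_map.1 ha
        have := keyB v (hmemA v hv) z (Or.inl hzX)
        simp only [hgz]
        omega
    have hB : (B.map gz).sum ≤ B.length * (m + k - 1) := by
      have := List.sum_le_card_nsmul (B.map gz) (m + k - 1) ?_
      · simpa using this
      · intro a ha
        obtain ⟨v, hv, rfl⟩ := List.mem_map.1 ha
        have := keyB v (hmemB v hv) z (Or.inl hzX)
        simp only [hgz]
        omega
    have hv₀b : gz v₀ ≤ m := keyC v₀ hv₀ hidx
    have hX : P.length * k ≤ (P.map gx).sum := by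
      have := List.card_nsmul_le_sum (P.map gx) k ?_
      · simpa using this
      · intro a ha
        obtain ⟨v, hv, rfl⟩ := List.mem_map.1 ha
        exact keyA v hv
    have hlenP : P.length = A.length + B.length + 1 := by rw [hPeq]; simp; omega
    -- arithmetic
    set a := A.length
    set b := B.length
    have hk' : (a + b + 2) * (m + 1) ≤ k := by
      have e : (a + b + 2) * (m + 1) = (P.length + 1) * (m + 1) := by
        rw [hlenP]
      rw [e]; exact hk
    have harith : a * (m - 1) + b * (m - 1) + m ≤ k := by
      have h1 : a * (m - 1) + b * (m - 1) + m ≤ (a + b + 2) * (m + 1) := by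
        have e : (a + b + 2) * (m + 1) = a * (m + 1) + b * (m + 1) + 2 * m + 2 := by ring
        have e2 : a * (m - 1) ≤ a * (m + 1) := Nat.mul_le_mul_left _ (by omega)
        have e3 : b * (m - 1) ≤ b * (m + 1) := Nat.mul_le_mul_left _ (by omega)
        omega
      omega
    have hmk : m + k - 1 = (m - 1) + k := by omega
    calc (P.map gz).sum = (A.map gz).sum + gz v₀ + (B.map gz).sum := hsum
      _ ≤ a * (m + k - 1) + m + b * (m + k - 1) := by
          have := hA; have := hB; have := hv₀b; omega
      _ = (a * (m - 1) + b * (m - 1) + m) + (a * k + b * k) := by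
          rw [hmk]; ring
      _ ≤ k + (a * k + b * k) := by omega
      _ = (a + b + 1) * k := by ring
      _ = P.length * k := by rw [hlenP]
      _ ≤ (P.map gx).sum := hX

end PcWNC
end
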